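/- Let ℓ : ℝ^d → ℝ be measurable with ℓ ≤ 0, and assume that Z(ω) = ∫_{ℝ^d} exp(ℓ(ξ)/ω) dξ ∈ (0,∞) and ∫_{ℝ^d} |ℓ(ξ)| exp(ℓ(ξ)/ω) dξ < ∞ for every ω > 0. Then Z is differentiable on (0, ∞) with Z′(ω) = −ω^{−2} Z(ω) ∫ ℓ dg_ω, and for every fixed ξ ∈ ℝ^d the map ω ↦ g_ω(ξ) is differentiable on (0, ∞) with derivative (d/dω) g_ω(ξ) = (g_ω(ξ)/ω²) (∫ ℓ dg_ω − ℓ(ξ)). -/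

import Mathlib

open MeasureTheory Real

/-- Differentiability in the temperature: `Z'(ω) = −ω⁻² Z(ω) ∫ ℓ dg_ω` and, for each
fixed `ξ`, `(d/dω) g_ω(ξ) = (g_ω(ξ)/ω²)(∫ ℓ dg_ω − ℓ(ξ))`, where
`g_ω(ξ) = exp(ℓ(ξ)/ω)/Z(ω)`. -/
theorem gibbs_deriv_in_temperature
    (d : ℕ) (ℓ : (Fin d → ℝ) → ℝ) (hℓ : Measurable ℓ) (hle : ∀ ξ, ℓ ξ ≤ 0)
    (hint : ∀ ω : ℝ, 0 < ω → Integrable (fun ξ => Real.exp (ℓ ξ / ω)))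
    (hpos : ∀ ω : ℝ, 0 < ω → 0 < ∫ ξ, Real.exp (ℓ ξ / ω))
    (hintℓ : ∀ ω : ℝ, 0 < ω → Integrable (fun ξ => |ℓ ξ| * Real.exp (ℓ ξ / ω))) :
    ∀ ω : ℝ, 0 < ω →
      (HasDerivAt (fun w : ℝ => ∫ ξ, Real.exp (ℓ ξ / w))
        (-(ω ^ 2)⁻¹ * (∫ ξ, Real.exp (ℓ ξ / ω)) *
          (∫ ξ, ℓ ξ * (Real.exp (ℓ ξ / ω) / ∫ x, Real.exp (ℓ x / ω)))) ω)
      ∧ ∀ ξ, HasDerivAt (fun w : ℝ => Real.exp (ℓ ξ / w) / ∫ x, Real.exp (ℓ x / w))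
          ((Real.exp (ℓ ξ / ω) / ∫ x, Real.exp (ℓ x / ω)) / ω ^ 2 *
            ((∫ x, ℓ x * (Real.exp (ℓ x / ω) / ∫ y, Real.exp (ℓ y / ω))) - ℓ ξ)) ω := by
  intro ω hω
  set Z : ℝ := ∫ ξ, Real.exp (ℓ ξ / ω) with hZ
  have hZpos : 0 < Z := hpos ω hω
  -- derivative of w ↦ exp(ℓ ξ / w) at any w > 0
  have hderiv : ∀ (ξ) (w : ℝ), 0 < w →
      HasDerivAt (fun w : ℝ => Real.exp (ℓ ξ / w))
        (-(ℓ ξ / w ^ 2) * Real.exp (ℓ ξ / w)) w := by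
    intro ξ w hw
    have h1 : HasDerivAt (fun w : ℝ => ℓ ξ / w) (ℓ ξ * (-(w ^ 2)⁻¹)) w := by
      simpa [div_eq_mul_inv] using (hasDerivAt_inv hw.ne').const_mul (ℓ ξ)
    have := h1.exp
    convert this using 1
    field_simp
  -- integrability of ℓ * exp
  have hℓexp : ∀ w : ℝ, 0 < w → Integrable (fun ξ => ℓ ξ * Real.exp (ℓ ξ / w)) := by
    intro w hw
    refine (hintℓ w hw).mono' ((hℓ.mul (by fun_prop)).aestronglyMeasurable) ?_
    filter_upwards with ξ
    simp [abs_mul, abs_of_nonneg (Real.exp_pos _).le]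
  -- main dominated-derivative step
  have hmain :
      HasDerivAt (fun w : ℝ => ∫ ξ, Real.exp (ℓ ξ / w))
        (∫ ξ, -(ℓ ξ / ω ^ 2) * Real.exp (ℓ ξ / ω)) ω := by
    have hε : (0 : ℝ) < ω / 2 := by linarith
    have key := hasDerivAt_integral_of_dominated_loc_of_deriv_le
      (μ := (volume : Measure (Fin d → ℝ)))
      (F := fun w ξ => Real.exp (ℓ ξ / w))
      (F' := fun w ξ => -(ℓ ξ / w ^ 2) * Real.exp (ℓ ξ / w))
      (bound := fun ξ => ((ω / 2) ^ 2)⁻¹ * (|ℓ ξ| * Real.exp (ℓ ξ / (2 * ω))))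
      (x₀ := ω) (Metric.ball_mem_nhds ω hε) ?_ (hint ω hω) ?_ ?_ ?_ ?_
    · exact key.2
    · filter_upwards with w using (by fun_prop : Measurable fun ξ => Real.exp (ℓ ξ / w)).aestronglyMeasurable
    · exact ((hℓ.div_const _).neg.mul (by fun_prop)).aestronglyMeasurable
    · filter_upwards with ξ w hw
      have hw1 : ω / 2 < w := by
        have := abs_lt.1 (by simpa [Real.dist_eq] using hw)
        linarith [this.1]
      have hw2 : w < 2 * ω := by
        have := abs_lt.1 (by simpa [Real.dist_eq] using hw)
        linarith [this.2]
      have hwpos : 0 < w := lt_trans hε hw1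
      have hexp : Real.exp (ℓ ξ / w) ≤ Real.exp (ℓ ξ / (2 * ω)) := by
        apply Real.exp_le_exp.2
        rw [div_le_div_iff₀ hwpos (by linarith)]
        have := mul_le_mul_of_nonpos_left hw2.le (hle ξ)
        linarith
      have hquad : ((w : ℝ) ^ 2)⁻¹ ≤ ((ω / 2) ^ 2)⁻¹ := by
        apply inv_anti₀ (by positivity)
        nlinarith
      calc ‖-(ℓ ξ / w ^ 2) * Real.exp (ℓ ξ / w)‖
          = (w ^ 2)⁻¹ * (|ℓ ξ| * Real.exp (ℓ ξ / w)) := by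
            rw [norm_mul, norm_neg, norm_div]
            simp [abs_of_nonneg (Real.exp_pos _).le, abs_of_nonneg (sq_nonneg w)]
            ring
        _ ≤ ((ω / 2) ^ 2)⁻¹ * (|ℓ ξ| * Real.exp (ℓ ξ / (2 * ω))) := by
            apply mul_le_mul
            · exact hquad
            · exact mul_le_mul_of_nonneg_left hexp (abs_nonneg _)
            · positivity
            · positivity
    · exact ((hintℓ (2 * ω) (by linarith)).const_mul _)
    · filter_upwards with ξ w hw
      have hw1 : ω / 2 < w := by
        have := abs_lt.1 (by simpa [Real.dist_eq] using hw)
        linarith [this.1]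
      exact hderiv ξ w (lt_trans hε hw1)
  constructor
  · convert hmain using 1
    have h1 : (∫ ξ, ℓ ξ * (Real.exp (ℓ ξ / ω) / Z)) = (∫ ξ, ℓ ξ * Real.exp (ℓ ξ / ω)) / Z := by
      rw [← integral_div]
      congr 1; ext ξ; ring
    have h2 : (∫ ξ, -(ℓ ξ / ω ^ 2) * Real.exp (ℓ ξ / ω))
        = -(ω ^ 2)⁻¹ * ∫ ξ, ℓ ξ * Real.exp (ℓ ξ / ω) := by
      rw [← integral_const_mul]
      congr 1; ext ξ; ring
    rw [h1, h2]
    field_simp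
  · intro ξ
    have hZderiv : HasDerivAt (fun w : ℝ => ∫ x, Real.exp (ℓ x / w))
        (∫ x, -(ℓ x / ω ^ 2) * Real.exp (ℓ x / ω)) ω := hmain
    have hnum := hderiv ξ ω hω
    have hdiv := hnum.div hZderiv hZpos.ne'
    refine hdiv.congr_deriv ?_
    have h1 : (∫ x, ℓ x * (Real.exp (ℓ x / ω) / Z)) = (∫ x, ℓ x * Real.exp (ℓ x / ω)) / Z := by
      rw [← integral_div]
      congr 1; ext x; ring
    have h2 : (∫ x, -(ℓ x / ω ^ 2) * Real.exp (ℓ x / ω))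
        = -(ω ^ 2)⁻¹ * ∫ x, ℓ x * Real.exp (ℓ x / ω) := by
      rw [← integral_const_mul]
      congr 1; ext x; ring
    rw [h1, h2, ← hZ]
    field_simp
    ring
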